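/- arXiv:2306.06925 — 2 statements merged into one kernel-verified Lean document; each statement's English description precedes it below -/
import Mathlib

section
/- The product P J of the binary Pascal matrix and the anti-diagonal matrix satisfies (P J)³ = I over GF(2). -/
open Matrix Finset




/-- The binary Pascal matrix over GF(2): entries C(j-1, i-1) mod 2 (1-indexed),
i.e. C(j, i) with 0-indexed `Fin`. -/
def pascal (m : ℕ) : Matrix (Fin m) (Fin m) (ZMod 2) :=
  fun i j => (Nat.choose j.val i.val : ZMod 2)

/-- The anti-diagonal matrix over GF(2), with ones on the anti-diagonal. -/
def antiDiag (m : ℕ) : Matrix (Fin m) (Fin m) (ZMod 2) :=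
  fun i j => if i.val + j.val + 1 = m then 1 else 0

lemma antiDiag_mul {m : ℕ} (A : Matrix (Fin m) (Fin m) (ZMod 2)) (i j : Fin m) :
    (antiDiag m * A) i j = A i.rev j := by
  rw [Matrix.mul_apply]
  rw [Finset.sum_eq_single i.rev]
  · have h : (i.val + i.rev.val + 1 = m) := by simp [Fin.rev]; omega
    simp only [antiDiag]
    rw [if_pos h, one_mul]
  · intro b _ hb
    have : ¬ (i.val + b.val + 1 = m) := by
      intro h
      apply hb
      apply Fin.ext
      simp [Fin.rev]; omega
    simp [antiDiag, this]
  · simp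

lemma mul_antiDiag {m : ℕ} (A : Matrix (Fin m) (Fin m) (ZMod 2)) (i j : Fin m) :
    (A * antiDiag m) i j = A i j.rev := by
  rw [Matrix.mul_apply]
  rw [Finset.sum_eq_single j.rev]
  · have h : (j.rev.val + j.val + 1 = m) := by simp [Fin.rev]; omega
    simp only [antiDiag]
    rw [if_pos h, mul_one]
  · intro b _ hb
    have : ¬ (b.val + j.val + 1 = m) := by
      intro h
      apply hb
      apply Fin.ext
      simp [Fin.rev]; omega
    simp [antiDiag, this]
  · simp

lemma antiDiag_sq {m : ℕ} : antiDiag m * antiDiag m = 1 := by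
  ext i j
  rw [antiDiag_mul]
  simp only [antiDiag, Matrix.one_apply]
  have : (i.rev.val + j.val + 1 = m) ↔ i = j := by
    simp [Fin.rev]
    constructor
    · intro h; apply Fin.ext; omega
    · intro h; subst h; omega
  rw [if_congr this rfl rfl]

lemma nat_PP (m i k : ℕ) (hik : i ≤ k) (hk : k < m) :
    ∑ j ∈ Finset.range m, (j.choose i * k.choose j) = k.choose i * 2^(k-i) := by
  have hsub : Finset.Ico i (k+1) ⊆ Finset.range m := by
    intro x hx; simp at hx ⊢; omega
  rw [← Finset.sum_subset hsub]
  · rw [Finset.sum_Ico_eq_sum_range]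
    have : ∀ s ∈ Finset.range (k+1-i), (i+s).choose i * k.choose (i+s)
        = k.choose i * (k-i).choose s := by
      intro s hs
      simp at hs
      rw [mul_comm, Nat.choose_mul (by omega)]
      congr 2
      omega
    rw [Finset.sum_congr rfl this, ← Finset.mul_sum]
    congr 1
    rw [show k+1-i = (k-i)+1 by omega]
    exact Nat.sum_range_choose (k-i)
  · intro x hx hx'
    simp at hx hx'
    rcases Nat.lt_or_ge x i with h | h
    · simp [Nat.choose_eq_zero_of_lt h]
    · have : k < x := by omega
      simp [Nat.choose_eq_zero_of_lt this]

lemma pascal_sq {m : ℕ} : pascal m * pascal m = 1 := by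
  ext i k
  rw [Matrix.mul_apply, Matrix.one_apply]
  simp only [pascal]
  rw [Fin.sum_univ_eq_sum_range (fun j => ((j.choose i.val : ZMod 2) * (k.val.choose j : ℕ))) m]
  by_cases h : i = k
  · subst h
    rw [if_pos rfl]
    have : ∀ j, (j ∈ Finset.range m) → j ≠ i.val →
        ((j.choose i.val : ZMod 2) * (i.val.choose j : ℕ)) = 0 := by
      intro j _ hj
      rcases Nat.lt_or_ge j i.val with hlt | hge
      · simp [Nat.choose_eq_zero_of_lt hlt]
      · have : i.val < j := by omega
        simp [Nat.choose_eq_zero_of_lt this]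
    rw [Finset.sum_eq_single i.val this (by intro h; exact absurd (Finset.mem_range.2 i.isLt) h)]
    simp
  · rw [if_neg h]
    rcases Nat.lt_or_ge k.val i.val with hlt | hge
    · apply Finset.sum_eq_zero
      intro j _
      rcases Nat.lt_or_ge j i.val with h1 | h1
      · simp [Nat.choose_eq_zero_of_lt h1]
      · have : k.val < j := by omega
        simp [Nat.choose_eq_zero_of_lt this]
    · have hik : i.val < k.val := by
        rcases Nat.lt_or_ge i.val k.val with h1 | h1
        · exact h1
        · exact absurd (Fin.ext (by omega)) h
      have := nat_PP m i.val k.val (le_of_lt hik) k.isLt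
      have hcast : (∑ j ∈ Finset.range m, ((j.choose i.val : ZMod 2) * (k.val.choose j : ℕ)))
          = ((∑ j ∈ Finset.range m, j.choose i.val * k.val.choose j : ℕ) : ZMod 2) := by
        push_cast; rfl
      rw [hcast, this]
      push_cast
      rw [show k.val - i.val = (k.val - i.val - 1) + 1 by omega]
      have : (2 : ZMod 2) = 0 := rfl
      rw [pow_succ, this]
      ring
open Matrix Finset

-- key mod-2 identity
lemma key_id : ∀ (j n i : ℕ), j ≤ n → i ≤ n →
    (∑ t ∈ Finset.range (j+1), ((j.choose t : ZMod 2) * ((n-t).choose i : ℕ))) =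
    ((n-j).choose (n-i) : ZMod 2) := by
  intro j
  induction j with
  | zero => intro n i _ hi; simp [Nat.choose_symm hi]
  | succ j ih =>
    intro n i hj hi
    have hj' : j ≤ n - 1 := by omega
    have hsplit : (∑ t ∈ Finset.range (j+2), (((j+1).choose t : ZMod 2) * ((n-t).choose i : ℕ)))
        = (∑ t ∈ Finset.range (j+1), ((j.choose t : ZMod 2) * (((n-1)-t).choose i : ℕ)))
        + (∑ t ∈ Finset.range (j+1), ((j.choose t : ZMod 2) * ((n-t).choose i : ℕ))) := by
      rw [Finset.sum_range_succ' (fun t => (((j+1).choose t : ZMod 2) * ((n-t).choose i : ℕ))) (j+1)]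
      simp only [Nat.choose_succ_succ j, Nat.cast_add, add_mul]
      rw [Finset.sum_add_distrib]
      have h1 : ∀ t ∈ Finset.range (j+1),
          ((j.choose t : ZMod 2) * ((n-(t+1)).choose i : ℕ)) =
          ((j.choose t : ZMod 2) * (((n-1)-t).choose i : ℕ)) := by
        intro t _
        have h : n-(t+1) = (n-1)-t := by omega
        rw [h]
      rw [Finset.sum_congr rfl h1]
      have h2 : (∑ t ∈ Finset.range (j+1), ((j.choose (t+1) : ZMod 2) * ((n-(t+1)).choose i : ℕ)))
          + ((j+1).choose 0 : ZMod 2) * ((n-0).choose i : ℕ)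
          = ∑ t ∈ Finset.range (j+2), ((j.choose t : ZMod 2) * ((n-t).choose i : ℕ)) := by
        rw [Finset.sum_range_succ' (fun t => ((j.choose t : ZMod 2) * ((n-t).choose i : ℕ))) (j+1)]
        simp
      have h3 : (∑ t ∈ Finset.range (j+2), ((j.choose t : ZMod 2) * ((n-t).choose i : ℕ)))
          = ∑ t ∈ Finset.range (j+1), ((j.choose t : ZMod 2) * ((n-t).choose i : ℕ)) := by
        rw [Finset.sum_range_succ]
        simp [Nat.choose_succ_self]
      have hch0 : ((j+1).choose 0 : ZMod 2) = (j.choose 0 : ZMod 2) := by simp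
      -- combine
      have := h2
      rw [h3] at this
      -- goal: Σ C(j,t)C(n-1-t,i) + Σ C(j,t+1)C(n-(t+1),i) + C(j+1,0)C(n,i) = A + Σ
      -- where this : Σ C(j,t+1)C(n-(t+1),i) + C(j+1,0)*C(n-0,i) = Σ C(j,t)C(n-t,i)
      rw [add_assoc, this]
    rw [hsplit, ih n i (by omega) hi]
    by_cases hin : i = n
    · have hz : ∀ t ∈ Finset.range (j+1), ((j.choose t : ZMod 2) * (((n-1)-t).choose i : ℕ)) = 0 := by
        intro t _
        have : ((n-1)-t).choose i = 0 := Nat.choose_eq_zero_of_lt (by omega)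
        simp [this]
      rw [Finset.sum_eq_zero hz]
      have h4 : n - i = 0 := by omega
      have h5 : n - j = (n - (j+1)) + 1 := by omega
      simp [h4, h5]
    · have hi' : i ≤ n - 1 := by omega
      rw [ih (n-1) i hj' hi']
      -- C(n-1-j, n-1-i) + C(n-j, n-i) = C(n-(j+1), n-i) in ZMod 2
      have ha : n - j = (n - 1 - j) + 1 := by omega
      have hb : n - i = (n - 1 - i) + 1 := by omega
      have hc : n - (j+1) = n - 1 - j := by omega
      rw [ha, hb, hc, Nat.choose_succ_succ]
      push_cast
      rw [← add_assoc, CharTwo.add_self_eq_zero, zero_add]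

lemma conj {m : ℕ} : pascal m * antiDiag m * pascal m = antiDiag m * pascal m * antiDiag m := by
  ext i j
  rw [mul_assoc, mul_assoc, Matrix.mul_apply, antiDiag_mul, mul_antiDiag]
  simp_rw [antiDiag_mul]
  simp only [pascal]
  have hrev : ∀ k : Fin m, (k.rev.val) = m - 1 - k.val := by
    intro k; simp [Fin.rev]; omega
  simp_rw [hrev]
  rw [Fin.sum_univ_eq_sum_range
    (fun k => ((k.choose i.val : ZMod 2) * (j.val.choose (m-1-k) : ℕ))) m]
  rw [← Finset.sum_range_reflect]
  have h1 : ∀ t ∈ Finset.range m,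
      (((m-1-t).choose i.val : ZMod 2) * (j.val.choose (m-1-(m-1-t)) : ℕ))
      = ((j.val.choose t : ZMod 2) * ((m-1-t).choose i.val : ℕ)) := by
    intro t ht
    simp at ht
    rw [show m-1-(m-1-t) = t by omega, mul_comm]
  rw [Finset.sum_congr rfl h1]
  have hsub : Finset.range (j.val+1) ⊆ Finset.range m := by
    intro x hx; simp at hx ⊢; have := j.isLt; omega
  rw [← Finset.sum_subset hsub]
  · exact key_id j.val (m-1) i.val (by have := j.isLt; omega) (by have := i.isLt; omega)
  · intro x hx hx'
    simp at hx hx'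
    simp [Nat.choose_eq_zero_of_lt hx']

/-- `(P J)³ = I` over GF(2). -/
theorem pascal_antiDiag_cube (m : ℕ) : (pascal m * antiDiag m) ^ 3 = 1 := by
  set P := pascal m
  set J := antiDiag m
  have h1 : P * P = 1 := pascal_sq
  have h2 : J * J = 1 := antiDiag_sq
  have h3 : P * J * P = J * P * J := conj
  have e1 : (P * J) ^ 3 = (P * J * P) * (J * P * J) := by
    rw [pow_succ, pow_succ, pow_one]
    simp only [mul_assoc]
  rw [e1, h3]
  rw [show (J*P*J) * (J*P*J) = J*(P*((J*J)*(P*J))) by simp only [mul_assoc], h2, one_mul,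
    show J*(P*(P*J)) = J*((P*P)*J) by simp only [mul_assoc], h1, one_mul, h2]
end

section
/- A pair of m×m matrices (C_x, C_y) over GF(2) is progressive if and only if C_x = L_x U and C_y = L_y P U for some upper unitriangular matrix U, lower unitriangular matrices L_x, L_y, and the binary Pascal matrix P. -/
open Matrix

/-- Lower unitriangular matrix over GF(2). -/
def IsLowerUni {m : ℕ} (L : Matrix (Fin m) (Fin m) (ZMod 2)) : Prop :=
  (∀ i, L i i = 1) ∧ ∀ i j : Fin m, i < j → L i j = 0

/-- Upper unitriangular matrix over GF(2). -/
def IsUpperUni {m : ℕ} (U : Matrix (Fin m) (Fin m) (ZMod 2)) : Prop :=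
  (∀ i, U i i = 1) ∧ ∀ i j : Fin m, j < i → U i j = 0
/-- The hybrid matrix whose first `m - r` rows are the first `m - r` rows of `Cx`
and whose last `r` rows are the first `r` rows of `Cy`. -/
def hybrid (m r : ℕ) (Cx Cy : Matrix (Fin m) (Fin m) (ZMod 2)) :
    Matrix (Fin m) (Fin m) (ZMod 2) :=
  fun i j =>
    if i.val < m - r then Cx i j
    else Cy ⟨i.val - (m - r), Nat.lt_of_le_of_lt (Nat.sub_le _ _) i.isLt⟩ j

/-- A dyadic pair: all hybrid matrices are invertible. -/
def DyadicPair {m : ℕ} (Cx Cy : Matrix (Fin m) (Fin m) (ZMod 2)) : Prop :=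
  ∀ r ≤ m, (hybrid m r Cx Cy).det ≠ 0
/-- A progressive pair: for all `r ≤ k ≤ m`, the hybrid matrix built from the
leading `k × k` blocks of `Cx` and `Cy` is invertible. -/
def ProgressivePair {m : ℕ} (Cx Cy : Matrix (Fin m) (Fin m) (ZMod 2)) : Prop :=
  ∀ k, ∀ hk : k ≤ m, ∀ r ≤ k,
    (hybrid k r (Cx.submatrix (Fin.castLE hk) (Fin.castLE hk))
                (Cy.submatrix (Fin.castLE hk) (Fin.castLE hk))).det ≠ 0

lemma F2.eq_one {a : ZMod 2} (h : a ≠ 0) : a = 1 := by fin_cases a; exacts [absurd rfl h, rfl]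

lemma IsLowerUni.det_eq {m} {L : Matrix (Fin m) (Fin m) (ZMod 2)} (h : IsLowerUni L) :
    L.det = 1 := by
  rw [Matrix.det_of_lowerTriangular L (fun i j hij => h.2 i j hij)]
  simp [h.1]

lemma IsUpperUni.det_eq {m} {U : Matrix (Fin m) (Fin m) (ZMod 2)} (h : IsUpperUni U) :
    U.det = 1 := by
  rw [Matrix.det_of_upperTriangular (fun i j hij => h.2 i j hij)]
  simp [h.1]

lemma fin_sum_eq_range {M : Type*} [AddCommMonoid M] (k : ℕ) (f : Fin k → M) :
    ∑ t : Fin k, f t = ∑ t ∈ Finset.range k, (if h : t < k then f ⟨t, h⟩ else 0) := by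
  rw [← Fin.sum_univ_eq_sum_range]
  exact Finset.sum_congr rfl fun t _ => by simp

lemma sum_trunc {M : Type*} [AddCommMonoid M] {k m : ℕ} (h : k ≤ m) (f : Fin m → M)
    (hf : ∀ t : Fin m, k ≤ t.val → f t = 0) :
    ∑ t : Fin m, f t = ∑ t : Fin k, f (Fin.castLE h t) := by
  rw [fin_sum_eq_range m f, fin_sum_eq_range k fun t => f (Fin.castLE h t)]
  rw [← Finset.sum_subset (Finset.range_subset_range.2 h)]
  · refine Finset.sum_congr rfl fun t ht => ?_
    have htk : t < k := Finset.mem_range.1 ht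
    rw [dif_pos htk, dif_pos (lt_of_lt_of_le htk h)]; rfl
  · intro t htm htk
    have : k ≤ t := le_of_not_gt (fun hc => htk (Finset.mem_range.2 hc))
    rcases Nat.lt_or_ge t m with hm | hm
    · rw [dif_pos hm]; exact hf ⟨t, hm⟩ this
    · rw [dif_neg (not_lt.2 hm)]


/-- Block determinant splitting for a `k × k` matrix whose bottom-left
`r × (k-r)` block vanishes. -/
lemma det_split {k r : ℕ} (hr : r ≤ k) (A : Matrix (Fin k) (Fin k) (ZMod 2))
    (hA : ∀ i j : Fin k, ¬ i.val < k - r → j.val < k - r → A i j = 0) :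
    A.det =
      (Matrix.det fun i j : Fin (k - r) =>
          A ⟨i.val, lt_of_lt_of_le i.isLt (Nat.sub_le k r)⟩
            ⟨j.val, lt_of_lt_of_le j.isLt (Nat.sub_le k r)⟩) *
      (Matrix.det fun i j : Fin r =>
          A ⟨k - r + i.val, by have := i.isLt; omega⟩
            ⟨k - r + j.val, by have := j.isLt; omega⟩) := by
  obtain ⟨e, hval⟩ : ∃ e : Fin (k - r) ⊕ Fin r ≃ Fin k, ∀ s : Fin (k-r) ⊕ Fin r,
      (e s).val = Sum.elim (fun i : Fin (k-r) => i.val) (fun i : Fin r => k - r + i.val) s :=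
    ⟨finSumFinEquiv.trans (finCongr (by omega)), by rintro (i | i) <;> simp⟩
  rw [← Matrix.det_submatrix_equiv_self e A]
  have hsub : A.submatrix e e = Matrix.fromBlocks
      (fun i j : Fin (k - r) =>
          A ⟨i.val, lt_of_lt_of_le i.isLt (Nat.sub_le k r)⟩
            ⟨j.val, lt_of_lt_of_le j.isLt (Nat.sub_le k r)⟩)
      (fun i j => A ⟨i.val, lt_of_lt_of_le i.isLt (Nat.sub_le k r)⟩
            ⟨k - r + j.val, by have := j.isLt; omega⟩)
      0
      (fun i j : Fin r =>
          A ⟨k - r + i.val, by have := i.isLt; omega⟩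
            ⟨k - r + j.val, by have := j.isLt; omega⟩) := by
    ext i j
    rcases i with i | i <;> rcases j with j | j <;>
      simp only [Matrix.submatrix_apply, Matrix.fromBlocks_apply₁₁,
        Matrix.fromBlocks_apply₁₂, Matrix.fromBlocks_apply₂₁, Matrix.fromBlocks_apply₂₂,
        Matrix.zero_apply]
    · exact congr_arg₂ A (Fin.ext (hval (Sum.inl i))) (Fin.ext (hval (Sum.inl j)))
    · exact congr_arg₂ A (Fin.ext (hval (Sum.inl i))) (Fin.ext (hval (Sum.inr j)))
    · refine hA _ _ ?_ ?_
      · rw [hval (Sum.inr i)]; simp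
      · rw [hval (Sum.inl j)]; exact j.isLt
    · exact congr_arg₂ A (Fin.ext (hval (Sum.inr i))) (Fin.ext (hval (Sum.inr j)))
  rw [hsub]; exact Matrix.det_fromBlocks_zero₂₁ _ _ _


/-- determinant of a Pascal window is 1. -/
lemma pascalWindow_det (x r : ℕ) :
    (Matrix.det fun i j : Fin r => ((x + j.val).choose i.val : ZMod 2)) = 1 := by
  set A : Matrix (Fin r) (Fin r) (ZMod 2) :=
    fun i t => if t.val ≤ i.val then ((x.choose (i.val - t.val) : ZMod 2)) else 0 with hA
  set B : Matrix (Fin r) (Fin r) (ZMod 2) :=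
    fun t j => ((j.val.choose t.val : ZMod 2)) with hB
  have hAB : (fun i j : Fin r => ((x + j.val).choose i.val : ZMod 2)) = A * B := by
    ext i j
    rw [Matrix.mul_apply]
    rw [fin_sum_eq_range r fun t => A i t * B t j]
    have h1 : ∀ t ∈ Finset.range r,
        (if h : t < r then A i ⟨t, h⟩ * B ⟨t, h⟩ j else 0) =
        (if t ≤ i.val then ((x.choose (i.val - t) * j.val.choose t : ℕ) : ZMod 2) else 0) := by
      intro t ht
      rw [dif_pos (Finset.mem_range.1 ht), hA, hB]
      by_cases hti : t ≤ i.val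
      · simp [hti]
      · simp [hti]
    rw [Finset.sum_congr rfl h1]
    rw [← Finset.sum_subset (Finset.range_subset_range.2 (Nat.succ_le_of_lt i.isLt))
        (fun t _ htn => by
          rw [if_neg]; intro hti; exact htn (Finset.mem_range.2 (Nat.lt_succ_of_le hti)))]
    have h2 : ∀ t ∈ Finset.range (i.val + 1),
        (if t ≤ i.val then ((x.choose (i.val - t) * j.val.choose t : ℕ) : ZMod 2) else 0) =
        ((x.choose (i.val - t) * j.val.choose t : ℕ) : ZMod 2) := by
      intro t ht
      rw [if_pos (Nat.lt_succ_iff.1 (Finset.mem_range.1 ht))]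
    rw [Finset.sum_congr rfl h2, ← Nat.cast_sum]
    congr 1
    rw [Nat.add_choose_eq, Finset.Nat.sum_antidiagonal_eq_sum_range_succ
      (fun a b => x.choose a * j.val.choose b)]
    rw [← Finset.sum_range_reflect]
    refine Finset.sum_congr rfl fun t ht => ?_
    have htle : t ≤ i.val := Nat.lt_succ_iff.1 (Finset.mem_range.1 ht)
    rw [show i.val + 1 - 1 - t = i.val - t by omega, Nat.sub_sub_self htle]
  have hdA : A.det = 1 := by
    rw [Matrix.det_of_lowerTriangular A (fun i j hij => by
      rw [hA]; exact if_neg (by exact_mod_cast not_le.2 hij))]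
    refine Finset.prod_eq_one fun i _ => by simp [hA]
  have hdB : B.det = 1 := by
    rw [Matrix.det_of_upperTriangular (fun i j hij => by
      show ((j.val.choose i.val : ℕ) : ZMod 2) = 0
      rw [Nat.choose_eq_zero_of_lt (show j.val < i.val from hij)]; simp)]
    refine Finset.prod_eq_one fun i _ => by simp [hB]
  rw [hAB, Matrix.det_mul, hdA, hdB, one_mul]

lemma hybrid_zero {k : ℕ} (A B : Matrix (Fin k) (Fin k) (ZMod 2)) : hybrid k 0 A B = A := by
  ext i j; simp [hybrid, i.isLt]

lemma hybrid_full {k : ℕ} (A B : Matrix (Fin k) (Fin k) (ZMod 2)) : hybrid k k A B = B := by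
  ext i j; simp [hybrid]

lemma hybrid_mul_right {k r : ℕ} (A B U : Matrix (Fin k) (Fin k) (ZMod 2)) :
    hybrid k r (A * U) (B * U) = hybrid k r A B * U := by
  ext i j
  by_cases hi : i.val < k - r <;>
    simp [hybrid, hi, Matrix.mul_apply]

/-- the rotation by `r` on `Fin k`. -/
def rotEquiv (k r : ℕ) (hr : r ≤ k) : Fin k ≃ Fin k where
  toFun s := ⟨if s.val < k - r then s.val + r else s.val - (k - r),
    by have := s.isLt; split <;> omega⟩
  invFun s := ⟨if s.val < r then s.val + (k - r) else s.val - r,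
    by have := s.isLt; split <;> omega⟩
  left_inv s := by
    have := s.isLt
    apply Fin.ext; dsimp only; split_ifs <;> omega
  right_inv s := by
    have := s.isLt
    apply Fin.ext; dsimp only; split_ifs <;> omega

def Dmat (k r : ℕ) (Lx Ly : Matrix (Fin k) (Fin k) (ZMod 2)) :
    Matrix (Fin k) (Fin k) (ZMod 2) :=
  fun i j =>
    if i.val < k - r then (if j.val < k - r then Lx i j else 0)
    else if j.val < k - r then 0
    else Ly ⟨i.val - (k - r), Nat.lt_of_le_of_lt (Nat.sub_le _ _) i.isLt⟩
           ⟨j.val - (k - r), Nat.lt_of_le_of_lt (Nat.sub_le _ _) j.isLt⟩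

lemma hybrid_mul_left {k r : ℕ} (hr : r ≤ k) (Lx Ly A B : Matrix (Fin k) (Fin k) (ZMod 2))
    (hLx : ∀ i j : Fin k, i < j → Lx i j = 0) (hLy : ∀ i j : Fin k, i < j → Ly i j = 0) :
    hybrid k r (Lx * A) (Ly * B) = Dmat k r Lx Ly * hybrid k r A B := by
  ext i j
  by_cases hi : i.val < k - r
  · simp only [hybrid, Dmat, Matrix.mul_apply, if_pos hi]
    refine Finset.sum_congr rfl fun s _ => ?_
    by_cases hs : s.val < k - r
    · rw [if_pos hs, if_pos hs]
    · rw [if_neg hs, if_neg hs, hLx i s (show i.val < s.val by omega), zero_mul, zero_mul]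
  · simp only [hybrid, Dmat, Matrix.mul_apply, if_neg hi]
    have hi' : i.val - (k - r) < r := by have := i.isLt; omega
    refine (Fintype.sum_equiv (rotEquiv k r hr)
      (fun s => (if s.val < k - r then 0
          else Ly ⟨i.val - (k - r), Nat.lt_of_le_of_lt (Nat.sub_le _ _) i.isLt⟩
            ⟨s.val - (k - r), Nat.lt_of_le_of_lt (Nat.sub_le _ _) s.isLt⟩) *
        (if s.val < k - r then A s j
          else B ⟨s.val - (k - r), Nat.lt_of_le_of_lt (Nat.sub_le _ _) s.isLt⟩ j))
      (fun t => Ly ⟨i.val - (k - r), Nat.lt_of_le_of_lt (Nat.sub_le _ _) i.isLt⟩ t * B t j)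
      fun s => ?_).symm
    beta_reduce
    by_cases hs : s.val < k - r
    · rw [if_pos hs, zero_mul]
      have hval : (rotEquiv k r hr s).val = s.val + r := by
        show (if s.val < k - r then s.val + r else s.val - (k - r)) = s.val + r
        rw [if_pos hs]
      rw [hLy _ _ (show (i.val - (k-r)) < (rotEquiv k r hr s).val by rw [hval]; omega), zero_mul]
    · rw [if_neg hs, if_neg hs]
      have hval : rotEquiv k r hr s =
          ⟨s.val - (k - r), Nat.lt_of_le_of_lt (Nat.sub_le _ _) s.isLt⟩ := by
        apply Fin.ext
        show (if s.val < k - r then s.val + r else s.val - (k - r)) = s.val - (k - r)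
        rw [if_neg hs]
      rw [hval]

def Xmat (k r : ℕ) (C : Matrix (Fin k) (Fin k) (ZMod 2)) : Matrix (Fin k) (Fin k) (ZMod 2) :=
  fun i j => (1 : Matrix (Fin k) (Fin k) (ZMod 2)) i j +
    (if ¬ i.val < k - r ∧ j.val < k - r
      then C ⟨i.val - (k - r), Nat.lt_of_le_of_lt (Nat.sub_le _ _) i.isLt⟩ j else 0)

def H2mat (k r : ℕ) (C : Matrix (Fin k) (Fin k) (ZMod 2)) : Matrix (Fin k) (Fin k) (ZMod 2) :=
  fun i j => if i.val < k - r then (1 : Matrix (Fin k) (Fin k) (ZMod 2)) i j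
    else if j.val < k - r then 0
    else C ⟨i.val - (k - r), Nat.lt_of_le_of_lt (Nat.sub_le _ _) i.isLt⟩ j

lemma hybrid_one_factor {k r : ℕ} (C : Matrix (Fin k) (Fin k) (ZMod 2)) :
    hybrid k r 1 C = Xmat k r C * H2mat k r C := by
  ext i j
  rw [Matrix.mul_apply]
  simp only [Xmat, add_mul, Finset.sum_add_distrib]
  have h1 : ∑ s : Fin k, (1 : Matrix (Fin k) (Fin k) (ZMod 2)) i s * H2mat k r C s j
      = H2mat k r C i j := by
    rw [← Matrix.mul_apply, Matrix.one_mul]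
  rw [h1]
  by_cases hi : i.val < k - r
  · have h2 : ∀ s : Fin k, (if ¬ i.val < k - r ∧ s.val < k - r
        then C ⟨i.val - (k - r), Nat.lt_of_le_of_lt (Nat.sub_le _ _) i.isLt⟩ s else 0) *
        H2mat k r C s j = 0 := fun s => by
      rw [if_neg (fun h => h.1 hi), zero_mul]
    rw [Finset.sum_congr rfl (fun s _ => h2 s), Finset.sum_const_zero, add_zero]
    simp [hybrid, H2mat, hi]
  · simp only [hybrid, if_neg hi]
    by_cases hj : j.val < k - r
    · have hH2ij : H2mat k r C i j = 0 := by simp [H2mat, hi, hj]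
      rw [hH2ij, zero_add, Finset.sum_eq_single j]
      · rw [if_pos ⟨hi, hj⟩]
        have : H2mat k r C j j = 1 := by
          simp [H2mat, hj, Matrix.one_apply]
        rw [this, mul_one]
      · intro s _ hsj
        by_cases hs : s.val < k - r
        · have : H2mat k r C s j = 0 := by
            simp [H2mat, hs, Matrix.one_apply_ne hsj]
          rw [this, mul_zero]
        · rw [if_neg (fun h => hs h.2), zero_mul]
      · intro h; exact absurd (Finset.mem_univ j) h
    · have hH2ij : H2mat k r C i j
          = C ⟨i.val - (k - r), Nat.lt_of_le_of_lt (Nat.sub_le _ _) i.isLt⟩ j := by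
        simp [H2mat, hi, hj]
      rw [hH2ij]
      have h3 : ∀ s : Fin k, (if ¬ i.val < k - r ∧ s.val < k - r
          then C ⟨i.val - (k - r), Nat.lt_of_le_of_lt (Nat.sub_le _ _) i.isLt⟩ s else 0) *
          H2mat k r C s j = 0 := fun s => by
        by_cases hs : s.val < k - r
        · have h0 : H2mat k r C s j = 0 := by
            have hne : s ≠ j := fun h => hj (h ▸ hs)
            simp [H2mat, hs, Matrix.one_apply_ne hne]
          rw [h0, mul_zero]
        · rw [if_neg (fun h => hs h.2), zero_mul]
      rw [Finset.sum_congr rfl (fun s _ => h3 s), Finset.sum_const_zero, add_zero]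

lemma det_Xmat {k r : ℕ} (C : Matrix (Fin k) (Fin k) (ZMod 2)) : (Xmat k r C).det = 1 := by
  rw [Matrix.det_of_lowerTriangular (Xmat k r C) (fun i j hij => by
    have hij' : i.val < j.val := hij
    simp only [Xmat]
    rw [Matrix.one_apply_ne (Fin.ne_of_lt hij'), if_neg (fun h => by omega), add_zero])]
  refine Finset.prod_eq_one fun i _ => by
    simp only [Xmat]
    rw [Matrix.one_apply_eq, if_neg (fun h => h.1 h.2), add_zero]

lemma det_H2mat {k r : ℕ} (hr : r ≤ k) (C : Matrix (Fin k) (Fin k) (ZMod 2)) :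
    (H2mat k r C).det =
      Matrix.det (fun i j : Fin r =>
        C ⟨i.val, lt_of_lt_of_le i.isLt hr⟩ ⟨k - r + j.val, by have := j.isLt; omega⟩) := by
  rw [det_split hr (H2mat k r C) (fun i j hi hj => by simp [H2mat, hi, hj])]
  have hTL : (fun i j : Fin (k - r) =>
      H2mat k r C ⟨i.val, lt_of_lt_of_le i.isLt (Nat.sub_le k r)⟩
        ⟨j.val, lt_of_lt_of_le j.isLt (Nat.sub_le k r)⟩) = (1 : Matrix (Fin (k-r)) (Fin (k-r)) (ZMod 2)) := by
    ext i j
    simp [H2mat, i.isLt, Matrix.one_apply, Fin.ext_iff]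
  rw [hTL, Matrix.det_one, one_mul]
  congr 1
  ext i j
  have h1 : ¬ (k - r + i.val < k - r) := by omega
  have h2 : ¬ (k - r + j.val < k - r) := by omega
  simp only [H2mat, if_neg h1, if_neg h2]
  exact congr_arg₂ C (Fin.ext (by simp only [Fin.val_mk]; omega)) rfl

lemma det_hybrid_one {k r : ℕ} (hr : r ≤ k) (C : Matrix (Fin k) (Fin k) (ZMod 2)) :
    (hybrid k r 1 C).det =
      Matrix.det (fun i j : Fin r =>
        C ⟨i.val, lt_of_lt_of_le i.isLt hr⟩ ⟨k - r + j.val, by have := j.isLt; omega⟩) := by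
  rw [hybrid_one_factor, Matrix.det_mul, det_Xmat, one_mul, det_H2mat hr]

lemma submatrix_one_eq {m k : ℕ} (h : k ≤ m) :
    (1 : Matrix (Fin m) (Fin m) (ZMod 2)).submatrix (Fin.castLE h) (Fin.castLE h) = 1 := by
  ext i j
  simp [Matrix.one_apply, Fin.ext_iff]

lemma IsLowerUni.submatrix {m k : ℕ} (h : k ≤ m) {L : Matrix (Fin m) (Fin m) (ZMod 2)}
    (hL : IsLowerUni L) : IsLowerUni (L.submatrix (Fin.castLE h) (Fin.castLE h)) :=
  ⟨fun i => hL.1 _, fun i j hij => hL.2 _ _ (show i.val < j.val from hij)⟩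

lemma IsUpperUni.submatrix {m k : ℕ} (h : k ≤ m) {U : Matrix (Fin m) (Fin m) (ZMod 2)}
    (hU : IsUpperUni U) : IsUpperUni (U.submatrix (Fin.castLE h) (Fin.castLE h)) :=
  ⟨fun i => hU.1 _, fun i j hij => hU.2 _ _ (show j.val < i.val from hij)⟩

lemma det_Dmat {k r : ℕ} (hr : r ≤ k) {Lx Ly : Matrix (Fin k) (Fin k) (ZMod 2)}
    (hLx : IsLowerUni Lx) (hLy : IsLowerUni Ly) : (Dmat k r Lx Ly).det = 1 := by
  rw [det_split hr _ (fun i j hi hj => by simp [Dmat, hi, hj])]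
  have hTL : (fun i j : Fin (k - r) =>
      Dmat k r Lx Ly ⟨i.val, lt_of_lt_of_le i.isLt (Nat.sub_le k r)⟩
        ⟨j.val, lt_of_lt_of_le j.isLt (Nat.sub_le k r)⟩)
      = Lx.submatrix (Fin.castLE (Nat.sub_le k r)) (Fin.castLE (Nat.sub_le k r)) := by
    ext i j
    simp [Dmat, i.isLt, j.isLt]
    rfl
  have hBR : (fun i j : Fin r =>
      Dmat k r Lx Ly ⟨k - r + i.val, by have := i.isLt; omega⟩
        ⟨k - r + j.val, by have := j.isLt; omega⟩)
      = Ly.submatrix (Fin.castLE hr) (Fin.castLE hr) := by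
    ext i j
    have h1 : ¬ (k - r + i.val < k - r) := by omega
    have h2 : ¬ (k - r + j.val < k - r) := by omega
    simp only [Dmat, if_neg h1, if_neg h2, Matrix.submatrix_apply]
    exact congr_arg₂ Ly (Fin.ext (by simp only [Fin.val_mk, Fin.coe_castLE]; omega))
      (Fin.ext (by simp only [Fin.val_mk, Fin.coe_castLE]; omega))
  rw [hTL, hBR, (hLx.submatrix (Nat.sub_le k r)).det_eq, (hLy.submatrix hr).det_eq, one_mul]

lemma submatrix_mul_lower {m k : ℕ} (h : k ≤ m) (L C : Matrix (Fin m) (Fin m) (ZMod 2))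
    (hL : ∀ i j : Fin m, i < j → L i j = 0) :
    (L * C).submatrix (Fin.castLE h) (Fin.castLE h)
      = L.submatrix (Fin.castLE h) (Fin.castLE h) * C.submatrix (Fin.castLE h) (Fin.castLE h) := by
  ext i j
  simp only [Matrix.submatrix_apply, Matrix.mul_apply]
  rw [sum_trunc h (fun t => L (Fin.castLE h i) t * C t (Fin.castLE h j))
      (fun t ht => by
        beta_reduce
        rw [hL _ _ (show (Fin.castLE h i).val < t.val from lt_of_lt_of_le i.isLt ht), zero_mul])]

lemma submatrix_mul_upper {m k : ℕ} (h : k ≤ m) (C U : Matrix (Fin m) (Fin m) (ZMod 2))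
    (hU : ∀ i j : Fin m, j < i → U i j = 0) :
    (C * U).submatrix (Fin.castLE h) (Fin.castLE h)
      = C.submatrix (Fin.castLE h) (Fin.castLE h) * U.submatrix (Fin.castLE h) (Fin.castLE h) := by
  ext i j
  simp only [Matrix.submatrix_apply, Matrix.mul_apply]
  rw [sum_trunc h (fun t => C (Fin.castLE h i) t * U t (Fin.castLE h j))
      (fun t ht => by
        beta_reduce
        rw [hU _ _ (show (Fin.castLE h j).val < t.val from lt_of_lt_of_le j.isLt ht), mul_zero])]

lemma prog_hybrid_det {m : ℕ} (Lx Ly U A B : Matrix (Fin m) (Fin m) (ZMod 2))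
    (hLx : IsLowerUni Lx) (hLy : IsLowerUni Ly) (hU : IsUpperUni U)
    (k : ℕ) (hk : k ≤ m) (r : ℕ) (hr : r ≤ k) :
    (hybrid k r ((Lx * A * U).submatrix (Fin.castLE hk) (Fin.castLE hk))
                ((Ly * B * U).submatrix (Fin.castLE hk) (Fin.castLE hk))).det
    = (hybrid k r (A.submatrix (Fin.castLE hk) (Fin.castLE hk))
                  (B.submatrix (Fin.castLE hk) (Fin.castLE hk))).det := by
  rw [submatrix_mul_upper hk (Lx * A) U hU.2, submatrix_mul_upper hk (Ly * B) U hU.2,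
      submatrix_mul_lower hk Lx A hLx.2, submatrix_mul_lower hk Ly B hLy.2,
      hybrid_mul_right, hybrid_mul_left hr _ _ _ _
        (fun i j hij => (hLx.submatrix hk).2 i j hij)
        (fun i j hij => (hLy.submatrix hk).2 i j hij),
      Matrix.det_mul, Matrix.det_mul,
      det_Dmat hr (hLx.submatrix hk) (hLy.submatrix hk),
      (hU.submatrix hk).det_eq, one_mul, mul_one]

lemma prog_mul_iff {m : ℕ} (Lx Ly U A B : Matrix (Fin m) (Fin m) (ZMod 2))
    (hLx : IsLowerUni Lx) (hLy : IsLowerUni Ly) (hU : IsUpperUni U) :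
    ProgressivePair (Lx * A * U) (Ly * B * U) ↔ ProgressivePair A B := by
  constructor <;> intro h k hk r hr <;> have h2 := h k hk r hr
  · rwa [prog_hybrid_det Lx Ly U A B hLx hLy hU k hk r hr] at h2
  · rwa [prog_hybrid_det Lx Ly U A B hLx hLy hU k hk r hr]

lemma pascal_upperUni (m : ℕ) : IsUpperUni (pascal m) := by
  constructor
  · intro i; show ((i.val.choose i.val : ℕ) : ZMod 2) = 1
    rw [Nat.choose_self, Nat.cast_one]
  · intro i j hij
    show ((j.val.choose i.val : ℕ) : ZMod 2) = 0
    rw [Nat.choose_eq_zero_of_lt (show j.val < i.val from hij), Nat.cast_zero]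

lemma prog_one_pascal (m : ℕ) :
    ProgressivePair (1 : Matrix (Fin m) (Fin m) (ZMod 2)) (pascal m) := by
  intro k hk r hr
  rw [submatrix_one_eq hk,
    show (pascal m).submatrix (Fin.castLE hk) (Fin.castLE hk) = pascal k from rfl,
    det_hybrid_one hr (pascal k),
    show (fun i j : Fin r => pascal k ⟨i.val, lt_of_lt_of_le i.isLt hr⟩
        ⟨k - r + j.val, by have := j.isLt; omega⟩)
      = fun i j : Fin r => ((k - r + j.val).choose i.val : ZMod 2) from rfl,
    pascalWindow_det]
  exact one_ne_zero

/-- corner determination: a matrix agreeing with a Pascal window off the corner and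
having nonzero determinant has the Pascal entry at the corner. -/
lemma det_corner {r : ℕ} (W : Matrix (Fin (r+1)) (Fin (r+1)) (ZMod 2)) (x : ℕ)
    (hagree : ∀ a b : Fin (r+1), a.val < r ∨ b.val < r →
      W a b = ((x + b.val).choose a.val : ZMod 2))
    (hdet : W.det ≠ 0) :
    W (Fin.last r) (Fin.last r) = ((x + r).choose r : ZMod 2) := by
  set Wp : Matrix (Fin (r+1)) (Fin (r+1)) (ZMod 2) :=
    (fun a b => ((x + b.val).choose a.val : ZMod 2)) with hWp
  set δ : ZMod 2 := W (Fin.last r) (Fin.last r) - Wp (Fin.last r) (Fin.last r) with hδ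
  have hupd : W = Wp.updateRow (Fin.last r) (Wp (Fin.last r) + Pi.single (Fin.last r) δ) := by
    ext a b
    rcases eq_or_ne a (Fin.last r) with rfl | ha
    · rw [Matrix.updateRow_self, Pi.add_apply]
      rcases eq_or_ne b (Fin.last r) with rfl | hb
      · rw [Pi.single_eq_same, hδ]; ring
      · rw [Pi.single_eq_of_ne hb, add_zero]
        exact hagree _ _ (Or.inr (Fin.val_lt_last hb))
    · rw [Matrix.updateRow_ne ha]
      exact hagree _ _ (Or.inl (Fin.val_lt_last ha))
  have hsingle : (Pi.single (Fin.last r) δ : Fin (r+1) → ZMod 2)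
      = δ • (Pi.single (Fin.last r) (1 : ZMod 2) : Fin (r+1) → ZMod 2) := by
    ext b
    rcases eq_or_ne b (Fin.last r) with rfl | hb
    · simp
    · simp [Pi.single_eq_of_ne hb]
  have hdWp : Wp.det = 1 := pascalWindow_det x (r+1)
  have hE : (Wp.updateRow (Fin.last r) (Pi.single (Fin.last r) (1 : ZMod 2))).det = 1 := by
    rw [det_split (show 1 ≤ r + 1 by omega) _ (fun a b ha hb => by
      have ha' : a = Fin.last r := Fin.ext (by have := a.isLt; simp only [Fin.val_last]; omega)
      subst ha'
      rw [Matrix.updateRow_self]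
      exact Pi.single_eq_of_ne (fun hc => by
        subst hc; simp only [Fin.val_last] at hb; omega) 1)]
    have hTL : (fun a b : Fin (r + 1 - 1) =>
        (Wp.updateRow (Fin.last r) (Pi.single (Fin.last r) (1 : ZMod 2)))
          ⟨a.val, lt_of_lt_of_le a.isLt (Nat.sub_le (r+1) 1)⟩
          ⟨b.val, lt_of_lt_of_le b.isLt (Nat.sub_le (r+1) 1)⟩)
        = fun a b : Fin (r + 1 - 1) => ((x + b.val).choose a.val : ZMod 2) := by
      ext a b
      rw [Matrix.updateRow_ne (fun hc => by
        have := congr_arg Fin.val hc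
        simp only [Fin.val_mk, Fin.val_last] at this
        have := a.isLt; omega)]
    rw [hTL, pascalWindow_det]
    rw [one_mul]; refine (Matrix.det_fin_one _).trans ?_; beta_reduce
    have hidx : ∀ (p : r + 1 - 1 + (0:Fin 1).val < r + 1),
        (⟨r + 1 - 1 + (0:Fin 1).val, p⟩ : Fin (r+1)) = Fin.last r :=
      fun p => Fin.ext (by simp)
    rw [hidx, Matrix.updateRow_self, Pi.single_eq_same]
  have hdet2 : W.det = 1 + δ := by
    rw [hupd, Matrix.det_updateRow_add, Matrix.updateRow_eq_self, hdWp, hsingle,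
      Matrix.det_updateRow_smul, hE]
    ring
  rw [hdet2] at hdet
  have hδ0 : δ = 0 := by
    have h1 : (1 : ZMod 2) + δ = 1 := F2.eq_one hdet
    have := add_left_cancel (a := (1:ZMod 2)) (b := δ) (c := 0) (by rw [add_zero]; exact h1)
    exact this
  have := sub_eq_zero.mp (hδ ▸ hδ0)
  rw [this]
  show ((x + (Fin.last r).val).choose (Fin.last r).val : ZMod 2) = ((x + r).choose r : ZMod 2)
  rw [Fin.val_last]

lemma eq_pascal_of_prog {m : ℕ} {V : Matrix (Fin m) (Fin m) (ZMod 2)}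
    (hV : IsUpperUni V) (h : ProgressivePair 1 V) : V = pascal m := by
  have key : ∀ jn : ℕ, ∀ j : Fin m, j.val = jn → ∀ i : Fin m, V i j = pascal m i j := by
    intro jn
    induction jn using Nat.strong_induction_on with
    | _ jn IHj =>
      intro j hj
      have inner : ∀ inn : ℕ, ∀ i : Fin m, i.val = inn → V i j = pascal m i j := by
        intro inn
        induction inn using Nat.strong_induction_on with
        | _ inn IHi =>
          intro i hi
          rcases lt_trichotomy i.val j.val with hij | hij | hij
          · -- main case : use the (j.val+1, i.val+1) hybrid determinant
            have hk : j.val + 1 ≤ m := j.isLt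
            have hr : i.val + 1 ≤ j.val + 1 := by omega
            have hdet0 := h (j.val + 1) hk (i.val + 1) hr
            rw [submatrix_one_eq hk, det_hybrid_one hr] at hdet0
            have hcorner := det_corner
              (fun a b : Fin (i.val + 1) =>
                (V.submatrix (Fin.castLE hk) (Fin.castLE hk))
                  ⟨a.val, lt_of_lt_of_le a.isLt hr⟩
                  ⟨j.val + 1 - (i.val + 1) + b.val, by have := b.isLt; omega⟩)
              (j.val + 1 - (i.val + 1))
              (fun a b hab => by
                dsimp only [Matrix.submatrix_apply]
                rcases Nat.lt_or_ge b.val i.val with hb | hb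
                · -- column strictly before j : outer induction hypothesis
                  have hcv : j.val + 1 - (i.val + 1) + b.val < j.val := by omega
                  have := IHj (j.val + 1 - (i.val + 1) + b.val) (by omega)
                    (Fin.castLE hk ⟨j.val + 1 - (i.val + 1) + b.val, by omega⟩) rfl
                    (Fin.castLE hk ⟨a.val, lt_of_lt_of_le a.isLt hr⟩)
                  exact this
                · -- b.val = i.val : column is j, row < i : inner induction hypothesis
                  have hbv : b.val = i.val := by have := b.isLt; omega
                  have ha : a.val < i.val := by
                    rcases hab with h' | h'
                    · exact h'
                    · omega
                  have hcolj : (Fin.castLE hk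
                      ⟨j.val + 1 - (i.val + 1) + b.val, by have := b.isLt; omega⟩ : Fin m) = j :=
                    Fin.ext (by simp only [Fin.coe_castLE, Fin.val_mk]; omega)
                  rw [hcolj, IHi a.val (by omega)
                    (Fin.castLE hk ⟨a.val, lt_of_lt_of_le a.isLt hr⟩) rfl]
                  show ((j.val.choose a.val : ℕ) : ZMod 2) = _
                  rw [show j.val + 1 - (i.val + 1) + b.val = j.val by omega])
              (by exact hdet0)
            have e1 : (fun a b : Fin (i.val + 1) =>
                (V.submatrix (Fin.castLE hk) (Fin.castLE hk))
                  ⟨a.val, lt_of_lt_of_le a.isLt hr⟩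
                  ⟨j.val + 1 - (i.val + 1) + b.val, by have := b.isLt; omega⟩)
                (Fin.last i.val) (Fin.last i.val) = V i j := by
              dsimp only [Matrix.submatrix_apply]
              exact congr_arg₂ V
                (Fin.ext (by simp))
                (Fin.ext (by simp only [Fin.coe_castLE, Fin.val_mk, Fin.val_last]; omega))
            rw [← e1]; beta_reduce; rw [hcorner]
            show ((j.val + 1 - (i.val + 1) + i.val).choose i.val : ZMod 2)
              = ((j.val.choose i.val : ℕ) : ZMod 2)
            rw [show j.val + 1 - (i.val + 1) + i.val = j.val by omega]
          · have hieq : i = j := Fin.ext hij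
            subst hieq
            show V i i = ((i.val.choose i.val : ℕ) : ZMod 2)
            rw [hV.1 i, Nat.choose_self, Nat.cast_one]
          · show V i j = ((j.val.choose i.val : ℕ) : ZMod 2)
            rw [hV.2 i j (show j.val < i.val from hij),
              Nat.choose_eq_zero_of_lt hij, Nat.cast_zero]
      exact fun i => inner i.val i rfl
  ext i j
  exact key j.val j rfl i

lemma isLowerUni_one {m : ℕ} : IsLowerUni (1 : Matrix (Fin m) (Fin m) (ZMod 2)) :=
  ⟨fun i => Matrix.one_apply_eq i, fun _ _ hij => Matrix.one_apply_ne (Fin.ne_of_lt hij)⟩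

lemma isUpperUni_one {m : ℕ} : IsUpperUni (1 : Matrix (Fin m) (Fin m) (ZMod 2)) :=
  ⟨fun i => Matrix.one_apply_eq i, fun _ _ hij => Matrix.one_apply_ne (Fin.ne_of_gt hij)⟩

lemma IsUpperUni.mul {m : ℕ} {A B : Matrix (Fin m) (Fin m) (ZMod 2)}
    (hA : IsUpperUni A) (hB : IsUpperUni B) : IsUpperUni (A * B) := by
  constructor
  · intro i
    rw [Matrix.mul_apply, Finset.sum_eq_single i]
    · rw [hA.1, hB.1, one_mul]
    · intro t _ hti
      rcases lt_or_gt_of_ne hti with h | h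
      · rw [hA.2 i t h, zero_mul]
      · rw [hB.2 t i h, mul_zero]
    · intro hmem; exact absurd (Finset.mem_univ i) hmem
  · intro i j hji
    rw [Matrix.mul_apply]
    refine Finset.sum_eq_zero fun t _ => ?_
    rcases Nat.lt_or_ge t.val i.val with h | h
    · rw [hA.2 i t h, zero_mul]
    · rw [hB.2 t j (show j.val < t.val by
        have : j.val < i.val := hji; omega), mul_zero]

lemma IsUpperUni.inv {m : ℕ} {U : Matrix (Fin m) (Fin m) (ZMod 2)} (hU : IsUpperUni U) :
    IsUpperUni U⁻¹ ∧ U⁻¹ * U = 1 := by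
  have hdet : IsUnit U.det := by rw [hU.det_eq]; exact isUnit_one
  have hinv : U⁻¹ * U = 1 := Matrix.nonsing_inv_mul U hdet
  have hinv' : U * U⁻¹ = 1 := Matrix.mul_nonsing_inv U hdet
  haveI := U.invertibleOfIsUnitDet hdet
  have htri : ∀ i j : Fin m, j < i → U⁻¹ i j = 0 := fun i j hij =>
    Matrix.blockTriangular_inv_of_blockTriangular
      (show U.BlockTriangular id from fun a b hab => hU.2 a b hab) hij
  refine ⟨⟨fun i => ?_, htri⟩, hinv⟩
  have h1 : (U * U⁻¹) i i = 1 := by rw [hinv']; exact Matrix.one_apply_eq i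
  rw [Matrix.mul_apply, Finset.sum_eq_single i] at h1
  · rwa [hU.1 i, one_mul] at h1
  · intro t _ hti
    rcases lt_or_gt_of_ne hti with h | h
    · rw [hU.2 i t h, zero_mul]
    · rw [htri t i h, mul_zero]
  · intro hmem; exact absurd (Finset.mem_univ i) hmem

lemma lu_exists : ∀ (m : ℕ) (C : Matrix (Fin m) (Fin m) (ZMod 2)),
    (∀ k (hk : k ≤ m), (C.submatrix (Fin.castLE hk) (Fin.castLE hk)).det ≠ 0) →
    ∃ L U, IsLowerUni L ∧ IsUpperUni U ∧ C = L * U := by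
  intro m
  induction m with
  | zero =>
    intro C _
    refine ⟨1, 1, isLowerUni_one, isUpperUni_one, ?_⟩
    ext i j; exact i.elim0
  | succ n IH =>
    intro C hC
    set C' : Matrix (Fin n) (Fin n) (ZMod 2) :=
      C.submatrix (Fin.castLE (Nat.le_succ n)) (Fin.castLE (Nat.le_succ n)) with hC'
    have hC'minors : ∀ k (hk : k ≤ n),
        (C'.submatrix (Fin.castLE hk) (Fin.castLE hk)).det ≠ 0 := by
      intro k hk
      have heq : C'.submatrix (Fin.castLE hk) (Fin.castLE hk)
          = C.submatrix (Fin.castLE (hk.trans (Nat.le_succ n)))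
              (Fin.castLE (hk.trans (Nat.le_succ n))) := by
        rw [hC', Matrix.submatrix_submatrix]
        congr 1 <;> funext t <;> exact Fin.ext rfl
      rw [heq]; exact hC _ _
    obtain ⟨L', U', hL', hU', hfac⟩ := IH C' hC'minors
    have hdL' : IsUnit L'.det := by rw [hL'.det_eq]; exact isUnit_one
    have hdU' : IsUnit U'.det := by rw [hU'.det_eq]; exact isUnit_one
    set b : Fin n → ZMod 2 := fun t => C (Fin.castSucc t) (Fin.last n) with hb
    set c : Fin n → ZMod 2 := fun t => C (Fin.last n) (Fin.castSucc t) with hc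
    set y : Fin n → ZMod 2 := L'⁻¹ *ᵥ b with hy
    set x : Fin n → ZMod 2 := Matrix.vecMul c U'⁻¹ with hx
    set u : ZMod 2 := C (Fin.last n) (Fin.last n) - x ⬝ᵥ y with hu
    set L : Matrix (Fin (n+1)) (Fin (n+1)) (ZMod 2) := fun i j =>
      if hi : i.val < n then (if hj : j.val < n then L' ⟨i.val, hi⟩ ⟨j.val, hj⟩ else 0)
      else (if hj : j.val < n then x ⟨j.val, hj⟩ else 1) with hL
    set U : Matrix (Fin (n+1)) (Fin (n+1)) (ZMod 2) := fun i j =>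
      if hi : i.val < n then (if hj : j.val < n then U' ⟨i.val, hi⟩ ⟨j.val, hj⟩ else y ⟨i.val, hi⟩)
      else (if hj : j.val < n then 0 else u) with hU
    have hLlow : IsLowerUni L := by
      constructor
      · intro i
        by_cases hi : i.val < n
        · simp only [hL, dif_pos hi]; exact hL'.1 _
        · simp only [hL, dif_neg hi]
      · intro i j hij
        have hjv : i.val < j.val := hij
        by_cases hi : i.val < n
        · by_cases hj : j.val < n
          · simp only [hL, dif_pos hi, dif_pos hj]
            exact hL'.2 _ _ (show i.val < j.val from hjv)
          · simp only [hL, dif_pos hi, dif_neg hj]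
        · exact absurd hjv (by have := j.isLt; omega)
    have hUstrict : ∀ i j : Fin (n+1), j < i → U i j = 0 := by
      intro i j hji
      have hjv : j.val < i.val := hji
      by_cases hi : i.val < n
      · by_cases hj : j.val < n
        · simp only [hU, dif_pos hi, dif_pos hj]
          exact hU'.2 _ _ (show j.val < i.val from hjv)
        · exact absurd hjv (by omega)
      · by_cases hj : j.val < n
        · simp only [hU, dif_neg hi, dif_pos hj]
        · exact absurd hjv (by have := i.isLt; omega)
    have hmul : C = L * U := by
      ext i j
      rw [Matrix.mul_apply, Fin.sum_univ_castSucc]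
      by_cases hi : i.val < n
      · have hLlast : L i (Fin.last n) = 0 := by
          simp only [hL]; rw [dif_pos hi, dif_neg (by simp)]
        rw [hLlast, zero_mul, add_zero]
        by_cases hj : j.val < n
        · have hterm : ∀ t : Fin n, L i (Fin.castSucc t) * U (Fin.castSucc t) j
              = L' ⟨i.val, hi⟩ t * U' t ⟨j.val, hj⟩ := fun t => by
            have e1 : L i (Fin.castSucc t) = L' ⟨i.val, hi⟩ t := by
              simp only [hL]
              rw [dif_pos hi, dif_pos (show (Fin.castSucc t).val < n from t.isLt)]
              rfl
            have e2 : U (Fin.castSucc t) j = U' t ⟨j.val, hj⟩ := by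
              simp only [hU]
              rw [dif_pos (show (Fin.castSucc t).val < n from t.isLt), dif_pos hj]
              rfl
            rw [e1, e2]
          rw [Finset.sum_congr rfl (fun t _ => hterm t), ← Matrix.mul_apply, ← hfac]
          rfl
        · have hterm : ∀ t : Fin n, L i (Fin.castSucc t) * U (Fin.castSucc t) j
              = L' ⟨i.val, hi⟩ t * y t := fun t => by
            have e1 : L i (Fin.castSucc t) = L' ⟨i.val, hi⟩ t := by
              simp only [hL]
              rw [dif_pos hi, dif_pos (show (Fin.castSucc t).val < n from t.isLt)]
              rfl
            have e2 : U (Fin.castSucc t) j = y t := by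
              simp only [hU]
              rw [dif_pos (show (Fin.castSucc t).val < n from t.isLt), dif_neg hj]
              rfl
            rw [e1, e2]
          rw [Finset.sum_congr rfl (fun t _ => hterm t)]
          have hLy : L' *ᵥ y = b := by
            rw [hy, Matrix.mulVec_mulVec, Matrix.mul_nonsing_inv _ hdL', Matrix.one_mulVec]
          have hjl : j = Fin.last n := Fin.ext (by have := j.isLt; simp only [Fin.val_last]; omega)
          have := congr_fun hLy ⟨i.val, hi⟩
          rw [Matrix.mulVec, dotProduct] at this
          rw [this, hb, hjl]
          rfl
      · have hil : i = Fin.last n := Fin.ext (by have := i.isLt; simp only [Fin.val_last]; omega)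
        subst hil
        have hLlast : L (Fin.last n) (Fin.last n) = 1 := by
          simp only [hL]; rw [dif_neg (by simp), dif_neg (by simp)]
        by_cases hj : j.val < n
        · have hUlast : U (Fin.last n) j = 0 := by
            simp only [hU]; rw [dif_neg (by simp), dif_pos hj]
          rw [hUlast, mul_zero, add_zero]
          have hterm : ∀ t : Fin n, L (Fin.last n) (Fin.castSucc t) * U (Fin.castSucc t) j
              = x t * U' t ⟨j.val, hj⟩ := fun t => by
            have e1 : L (Fin.last n) (Fin.castSucc t) = x t := by
              simp only [hL]
              rw [dif_neg (by simp), dif_pos (show (Fin.castSucc t).val < n from t.isLt)]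
              rfl
            have e2 : U (Fin.castSucc t) j = U' t ⟨j.val, hj⟩ := by
              simp only [hU]
              rw [dif_pos (show (Fin.castSucc t).val < n from t.isLt), dif_pos hj]
              rfl
            rw [e1, e2]
          rw [Finset.sum_congr rfl (fun t _ => hterm t)]
          have hxU : Matrix.vecMul x U' = c := by
            rw [hx, Matrix.vecMul_vecMul, Matrix.nonsing_inv_mul _ hdU', Matrix.vecMul_one]
          have hthis := congr_fun hxU ⟨j.val, hj⟩
          rw [Matrix.vecMul, dotProduct] at hthis
          rw [hthis, hc]
          rfl
        · have hjl : j = Fin.last n := Fin.ext (by have := j.isLt; simp only [Fin.val_last]; omega)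
          subst hjl
          have hUlast : U (Fin.last n) (Fin.last n) = u := by
            simp only [hU]; rw [dif_neg (by simp), dif_neg (by simp)]
          rw [hLlast, hUlast, one_mul]
          have hterm : ∀ t : Fin n,
              L (Fin.last n) (Fin.castSucc t) * U (Fin.castSucc t) (Fin.last n)
              = x t * y t := fun t => by
            have e1 : L (Fin.last n) (Fin.castSucc t) = x t := by
              simp only [hL]
              rw [dif_neg (by simp), dif_pos (show (Fin.castSucc t).val < n from t.isLt)]
              rfl
            have e2 : U (Fin.castSucc t) (Fin.last n) = y t := by
              simp only [hU]
              rw [dif_pos (show (Fin.castSucc t).val < n from t.isLt), dif_neg (by simp)]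
              rfl
            rw [e1, e2]
          rw [Finset.sum_congr rfl (fun t _ => hterm t), hu]
          have hdot : ∑ t : Fin n, x t * y t = x ⬝ᵥ y := rfl
          rw [hdot]; ring
    have hdetC : C.det ≠ 0 := by
      have h0 := hC (n+1) (le_refl (n+1))
      have heq : C.submatrix (Fin.castLE (le_refl (n+1))) (Fin.castLE (le_refl (n+1))) = C := by
        ext a b; exact congr_arg₂ C (Fin.ext rfl) (Fin.ext rfl)
      rwa [heq] at h0
    have hdetU : U.det = u := by
      rw [Matrix.det_of_upperTriangular
        (show U.BlockTriangular id from fun a b hab => hUstrict a b hab)]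
      rw [Fin.prod_univ_castSucc]
      have hd1 : ∀ t : Fin n, U (Fin.castSucc t) (Fin.castSucc t) = 1 := fun t => by
        simp only [hU]
        rw [dif_pos (show (Fin.castSucc t).val < n from t.isLt),
          dif_pos (show (Fin.castSucc t).val < n from t.isLt)]
        exact hU'.1 _
      have hd2 : U (Fin.last n) (Fin.last n) = u := by
        simp only [hU]; rw [dif_neg (by simp), dif_neg (by simp)]
      rw [Finset.prod_congr rfl (fun t _ => hd1 t), hd2, Finset.prod_const_one, one_mul]
    have hu1 : u = 1 := by
      have hcu : C.det = u := by rw [hmul, Matrix.det_mul, hLlow.det_eq, one_mul, hdetU]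
      exact F2.eq_one (hcu ▸ hdetC)
    have hUup : IsUpperUni U := by
      refine ⟨fun i => ?_, hUstrict⟩
      by_cases hi : i.val < n
      · simp only [hU]; rw [dif_pos hi, dif_pos hi]; exact hU'.1 _
      · simp only [hU]; rw [dif_neg hi, dif_neg hi]; exact hu1
    exact ⟨L, U, hLlow, hUup, hmul⟩


/-- A pair `(C_x, C_y)` is progressive iff `C_x = L_x U` and `C_y = L_y P U`
for some upper unitriangular `U` and lower unitriangular `L_x`, `L_y`. -/
theorem progressivePair_iff (m : ℕ) (Cx Cy : Matrix (Fin m) (Fin m) (ZMod 2)) :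
    ProgressivePair Cx Cy ↔
      ∃ U Lx Ly, IsUpperUni U ∧ IsLowerUni Lx ∧ IsLowerUni Ly ∧
        Cx = Lx * U ∧ Cy = Ly * pascal m * U := by
  constructor
  · intro h
    have hx : ∀ k (hk : k ≤ m), (Cx.submatrix (Fin.castLE hk) (Fin.castLE hk)).det ≠ 0 := by
      intro k hk
      have := h k hk 0 (Nat.zero_le k)
      rwa [hybrid_zero] at this
    have hy : ∀ k (hk : k ≤ m), (Cy.submatrix (Fin.castLE hk) (Fin.castLE hk)).det ≠ 0 := by
      intro k hk
      have := h k hk k (le_refl k)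
      rwa [hybrid_full] at this
    obtain ⟨Lx, Ux, hLx, hUx, hfx⟩ := lu_exists m Cx hx
    obtain ⟨Ly, Uy, hLy, hUy, hfy⟩ := lu_exists m Cy hy
    obtain ⟨hUxInv, hinv⟩ := hUx.inv
    set V : Matrix (Fin m) (Fin m) (ZMod 2) := Uy * Ux⁻¹ with hV
    have hVU : V * Ux = Uy := by rw [hV, mul_assoc, hinv, mul_one]
    have hVupper : IsUpperUni V := hUy.mul hUxInv
    have h2 : ProgressivePair Ux Uy :=
      (prog_mul_iff Lx Ly 1 Ux Uy hLx hLy isUpperUni_one).mp (by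
        rw [mul_one, mul_one, ← hfx, ← hfy]; exact h)
    have h3 : ProgressivePair 1 V := by
      refine (prog_mul_iff 1 1 Ux 1 V isLowerUni_one isLowerUni_one hUx).mp ?_
      rw [one_mul, one_mul, one_mul, hVU]
      exact h2
    have hVP : V = pascal m := eq_pascal_of_prog hVupper h3
    refine ⟨Ux, Lx, Ly, hUx, hLx, hLy, hfx, ?_⟩
    rw [hfy, ← hVU, hVP]
    exact (mul_assoc _ _ _).symm
  · rintro ⟨U, Lx, Ly, hU, hLx, hLy, rfl, rfl⟩
    have := (prog_mul_iff Lx Ly U 1 (pascal m) hLx hLy hU).mpr (prog_one_pascal m)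
    rwa [mul_one] at this
end
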